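/- Fix δ = 1/100. There exists a constant B > 0 such that for every ε with 0 < ε < 1/2 there exists a twice continuously differentiable function φ : ℝ → ℝ with the following properties: (i) φ(x) = (1−ε)·x for all x ≥ −(1/4 + δ)²; (ii) φ(x) = x/(1−ε) for all x with −(1/2 + δ)² ≤ x ≤ −(1/2 − δ)²; (iii) φ(x) = x for all x ≤ −(1−δ)²; (iv) for all x ∈ [−1, 0]: 1 − εB ≤ φ′(x) ≤ 1 + εB, −εB ≤ φ″(x) ≤ εB, and (1 + εB)·x ≤ φ(x) ≤ (1 − εB)·x. -/

import Mathlib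

open Real Set

/-- Transition function: `0` for `x ≤ -(49/100)^2`, `1` for `x ≥ -(26/100)^2`. -/
noncomputable def repTf (x : ℝ) : ℝ :=
  Real.smoothTransition ((x + (49/100)^2) / ((49/100)^2 - (26/100)^2))

/-- Bump function: `1` on `[-(51/100)^2... wait, on the middle interval]`, `0` outside. -/
noncomputable def repTg (x : ℝ) : ℝ :=
  Real.smoothTransition ((x + (99/100)^2) / ((99/100)^2 - (51/100)^2)) * (1 - repTf x)

noncomputable def repU (x : ℝ) : ℝ := -(x * repTf x)
noncomputable def repV (x : ℝ) : ℝ := x * repTg x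

lemma repTf_contDiff : ContDiff ℝ (⊤ : ℕ∞) repTf := by
  unfold repTf
  exact Real.smoothTransition.contDiff.comp
    ((contDiff_id.add contDiff_const).div_const _)

lemma repTg_contDiff : ContDiff ℝ (⊤ : ℕ∞) repTg := by
  unfold repTg
  exact (Real.smoothTransition.contDiff.comp
    ((contDiff_id.add contDiff_const).div_const _)).mul
    (contDiff_const.sub repTf_contDiff)

lemma repU_contDiff : ContDiff ℝ (⊤ : ℕ∞) repU := by
  unfold repU; exact (contDiff_id.mul repTf_contDiff).neg

lemma repV_contDiff : ContDiff ℝ (⊤ : ℕ∞) repV := by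
  unfold repV; exact contDiff_id.mul repTg_contDiff

lemma repTf_nonneg (x : ℝ) : 0 ≤ repTf x := Real.smoothTransition.nonneg _
lemma repTf_le_one (x : ℝ) : repTf x ≤ 1 := Real.smoothTransition.le_one _
lemma repTg_nonneg (x : ℝ) : 0 ≤ repTg x :=
  mul_nonneg (Real.smoothTransition.nonneg _) (by linarith [repTf_le_one x])
lemma repTg_le_one (x : ℝ) : repTg x ≤ 1 := by
  have h1 := Real.smoothTransition.le_one ((x + (99/100)^2) / ((99/100)^2 - (51/100)^2))
  have h2 := Real.smoothTransition.nonneg ((x + (99/100)^2) / ((99/100)^2 - (51/100)^2))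
  have h3 := repTf_nonneg x
  have h4 := repTf_le_one x
  unfold repTg
  nlinarith

lemma repTf_eq_one {x : ℝ} (hx : -(26/100:ℝ)^2 ≤ x) : repTf x = 1 := by
  apply Real.smoothTransition.one_of_one_le
  rw [le_div_iff₀ (by norm_num)]
  nlinarith

lemma repTf_eq_zero {x : ℝ} (hx : x ≤ -(49/100:ℝ)^2) : repTf x = 0 := by
  apply Real.smoothTransition.zero_of_nonpos
  apply div_nonpos_of_nonpos_of_nonneg <;> nlinarith

lemma repTg_eq_one {x : ℝ} (hx1 : -(51/100:ℝ)^2 ≤ x) (hx2 : x ≤ -(49/100:ℝ)^2) :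
    repTg x = 1 := by
  unfold repTg
  rw [repTf_eq_zero hx2, Real.smoothTransition.one_of_one_le]
  · ring
  · rw [le_div_iff₀ (by norm_num)]; nlinarith

lemma repTg_eq_zero_right {x : ℝ} (hx : -(26/100:ℝ)^2 ≤ x) : repTg x = 0 := by
  unfold repTg; rw [repTf_eq_one hx]; ring

lemma repTg_eq_zero_left {x : ℝ} (hx : x ≤ -(99/100:ℝ)^2) : repTg x = 0 := by
  unfold repTg
  rw [Real.smoothTransition.zero_of_nonpos, zero_mul]
  apply div_nonpos_of_nonpos_of_nonneg <;> nlinarith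

set_option maxHeartbeats 800000 in
theorem reparametrization_function :
    ∃ B : ℝ, 0 < B ∧ ∀ ε : ℝ, 0 < ε → ε < 1 / 2 →
      ∃ φ : ℝ → ℝ, ContDiff ℝ 2 φ ∧
        (∀ x : ℝ, -(1 / 4 + 1 / 100) ^ 2 ≤ x → φ x = (1 - ε) * x) ∧
        (∀ x : ℝ, -(1 / 2 + 1 / 100) ^ 2 ≤ x → x ≤ -(1 / 2 - 1 / 100) ^ 2 →
          φ x = x / (1 - ε)) ∧
        (∀ x : ℝ, x ≤ -(1 - 1 / 100) ^ 2 → φ x = x) ∧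
        (∀ x ∈ Set.Icc (-1 : ℝ) 0,
          (1 - ε * B ≤ deriv φ x ∧ deriv φ x ≤ 1 + ε * B) ∧
          (-(ε * B) ≤ deriv (deriv φ) x ∧ deriv (deriv φ) x ≤ ε * B) ∧
          ((1 + ε * B) * x ≤ φ x ∧ φ x ≤ (1 - ε * B) * x)) := by
  have hle1 : (1 : WithTop ℕ∞) ≤ ((⊤ : ℕ∞) : WithTop ℕ∞) := by norm_cast
  have hle2 : (2 : WithTop ℕ∞) ≤ ((⊤ : ℕ∞) : WithTop ℕ∞) := by norm_cast
  have hU := repU_contDiff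
  have hV := repV_contDiff
  have hU' : ContDiff ℝ (⊤ : ℕ∞) (deriv repU) := (contDiff_infty_iff_deriv.mp hU).2
  have hV' : ContDiff ℝ (⊤ : ℕ∞) (deriv repV) := (contDiff_infty_iff_deriv.mp hV).2
  have hU'' : ContDiff ℝ (⊤ : ℕ∞) (deriv (deriv repU)) :=
    (contDiff_infty_iff_deriv.mp hU').2
  have hV'' : ContDiff ℝ (⊤ : ℕ∞) (deriv (deriv repV)) :=
    (contDiff_infty_iff_deriv.mp hV').2
  obtain ⟨M1, hM1⟩ := (isCompact_Icc (a := (-1:ℝ)) (b := 0)).exists_bound_of_continuousOn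
    (hU'.continuous.continuousOn)
  obtain ⟨M2, hM2⟩ := (isCompact_Icc (a := (-1:ℝ)) (b := 0)).exists_bound_of_continuousOn
    (hU''.continuous.continuousOn)
  obtain ⟨M3, hM3⟩ := (isCompact_Icc (a := (-1:ℝ)) (b := 0)).exists_bound_of_continuousOn
    (hV'.continuous.continuousOn)
  obtain ⟨M4, hM4⟩ := (isCompact_Icc (a := (-1:ℝ)) (b := 0)).exists_bound_of_continuousOn
    (hV''.continuous.continuousOn)
  obtain ⟨B, hB⟩ : ∃ B : ℝ, B = |M1| + 2*|M3| + |M2| + 2*|M4| + 3 := ⟨_, rfl⟩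
  refine ⟨B, by rw [hB]; positivity, fun ε hε hε2 => ?_⟩
  have h1ε : (0:ℝ) < 1 - ε := by linarith
  obtain ⟨η, hη⟩ : ∃ η : ℝ, η = ε / (1 - ε) := ⟨_, rfl⟩
  have hη0 : 0 < η := hη ▸ div_pos hε h1ε
  have hη2 : η ≤ 2 * ε := by
    rw [hη, div_le_iff₀ h1ε]; nlinarith
  refine ⟨fun x => x + ε * repU x + η * repV x, ?_, ?_, ?_, ?_, ?_⟩
  · exact (contDiff_id.add (contDiff_const.mul (hU.of_le hle2))).add
      (contDiff_const.mul (hV.of_le hle2))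
  · intro x hx
    have hx' : -(26/100:ℝ)^2 ≤ x := by norm_num at hx ⊢; linarith
    have h1 : repU x = -x := by rw [repU, repTf_eq_one hx']; ring
    have h2 : repV x = 0 := by rw [repV, repTg_eq_zero_right hx']; ring
    show x + ε * repU x + η * repV x = (1 - ε) * x
    rw [h1, h2]; ring
  · intro x hx1 hx2
    have hx1' : -(51/100:ℝ)^2 ≤ x := by norm_num at hx1 ⊢; linarith
    have hx2' : x ≤ -(49/100:ℝ)^2 := by norm_num at hx2 ⊢; linarith
    have h1 : repU x = 0 := by rw [repU, repTf_eq_zero hx2']; ring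
    have h2 : repV x = x := by rw [repV, repTg_eq_one hx1' hx2']; ring
    show x + ε * repU x + η * repV x = x / (1 - ε)
    rw [h1, h2, hη]; field_simp; ring
  · intro x hx
    have hx' : x ≤ -(99/100:ℝ)^2 := by norm_num at hx ⊢; linarith
    have h1 : repU x = 0 := by
      rw [repU, repTf_eq_zero (by nlinarith)]; ring
    have h2 : repV x = 0 := by rw [repV, repTg_eq_zero_left hx']; ring
    show x + ε * repU x + η * repV x = x
    rw [h1, h2]; ring
  · have hd1 : ∀ x : ℝ, HasDerivAt (fun x => x + ε * repU x + η * repV x)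
        (1 + ε * deriv repU x + η * deriv repV x) x := by
      intro x
      exact ((hasDerivAt_id x).add
        (((hU.differentiable (by simp) x).hasDerivAt).const_mul ε)).add
        (((hV.differentiable (by simp) x).hasDerivAt).const_mul η)
    have hD1 : deriv (fun x => x + ε * repU x + η * repV x)
        = fun x => 1 + ε * deriv repU x + η * deriv repV x :=
      funext fun x => (hd1 x).deriv
    have hd2 : ∀ x : ℝ, HasDerivAt (fun x => 1 + ε * deriv repU x + η * deriv repV x)
        (0 + ε * deriv (deriv repU) x + η * deriv (deriv repV) x) x := by
      intro x
      exact ((hasDerivAt_const x 1).add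
        (((hU'.differentiable (by simp) x).hasDerivAt).const_mul ε)).add
        (((hV'.differentiable (by simp) x).hasDerivAt).const_mul η)
    have hD2 : deriv (deriv (fun x => x + ε * repU x + η * repV x))
        = fun x => 0 + ε * deriv (deriv repU) x + η * deriv (deriv repV) x := by
      rw [hD1]; exact funext fun x => (hd2 x).deriv
    intro x hx
    obtain ⟨hx1, hx2⟩ := hx
    have b1 := hM1 x ⟨hx1, hx2⟩
    have b2 := hM2 x ⟨hx1, hx2⟩
    have b3 := hM3 x ⟨hx1, hx2⟩
    have b4 := hM4 x ⟨hx1, hx2⟩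
    rw [Real.norm_eq_abs, abs_le] at b1 b2 b3 b4
    have ha1 : M1 ≤ |M1| := le_abs_self _
    have ha2 : M2 ≤ |M2| := le_abs_self _
    have ha3 : M3 ≤ |M3| := le_abs_self _
    have ha4 : M4 ≤ |M4| := le_abs_self _
    have hn1 : (0:ℝ) ≤ |M1| := abs_nonneg _
    have hn2 : (0:ℝ) ≤ |M2| := abs_nonneg _
    have hn3 : (0:ℝ) ≤ |M3| := abs_nonneg _
    have hn4 : (0:ℝ) ≤ |M4| := abs_nonneg _
    have hEB : ε * B = ε*|M1| + 2*(ε*|M3|) + ε*|M2| + 2*(ε*|M4|) + 3*ε := by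
      rw [hB]; ring
    -- clean bounds for the first derivative terms
    have c1 : ε * deriv repU x ≤ ε * |M1| :=
      mul_le_mul_of_nonneg_left (b1.2.trans ha1) hε.le
    have c1' : -(ε * |M1|) ≤ ε * deriv repU x := by
      have h0 : -|M1| ≤ deriv repU x := le_trans (neg_le_neg ha1) b1.1
      have h1 := mul_le_mul_of_nonneg_left h0 hε.le
      linarith
    have c3 : η * deriv repV x ≤ 2 * (ε * |M3|) := by
      have h1 : η * deriv repV x ≤ η * |M3| :=
        mul_le_mul_of_nonneg_left (b3.2.trans ha3) hη0.le
      have h2 : η * |M3| ≤ 2 * ε * |M3| := mul_le_mul_of_nonneg_right hη2 hn3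
      linarith
    have c3' : -(2 * (ε * |M3|)) ≤ η * deriv repV x := by
      have h0 : -|M3| ≤ deriv repV x := le_trans (neg_le_neg ha3) b3.1
      have h1 := mul_le_mul_of_nonneg_left h0 hη0.le
      have h2 : η * |M3| ≤ 2 * ε * |M3| := mul_le_mul_of_nonneg_right hη2 hn3
      linarith
    have c2 : ε * deriv (deriv repU) x ≤ ε * |M2| :=
      mul_le_mul_of_nonneg_left (b2.2.trans ha2) hε.le
    have c2' : -(ε * |M2|) ≤ ε * deriv (deriv repU) x := by
      have h0 : -|M2| ≤ deriv (deriv repU) x := le_trans (neg_le_neg ha2) b2.1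
      have h1 := mul_le_mul_of_nonneg_left h0 hε.le
      linarith
    have c4 : η * deriv (deriv repV) x ≤ 2 * (ε * |M4|) := by
      have h1 : η * deriv (deriv repV) x ≤ η * |M4| :=
        mul_le_mul_of_nonneg_left (b4.2.trans ha4) hη0.le
      have h2 : η * |M4| ≤ 2 * ε * |M4| := mul_le_mul_of_nonneg_right hη2 hn4
      linarith
    have c4' : -(2 * (ε * |M4|)) ≤ η * deriv (deriv repV) x := by
      have h0 : -|M4| ≤ deriv (deriv repV) x := le_trans (neg_le_neg ha4) b4.1
      have h1 := mul_le_mul_of_nonneg_left h0 hη0.le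
      have h2 : η * |M4| ≤ 2 * ε * |M4| := mul_le_mul_of_nonneg_right hη2 hn4
      linarith
    have hε3 : 0 ≤ 3 * ε := by linarith
    refine ⟨?_, ?_, ?_⟩
    · rw [hD1]
      show 1 - ε * B ≤ 1 + ε * deriv repU x + η * deriv repV x ∧
        1 + ε * deriv repU x + η * deriv repV x ≤ 1 + ε * B
      constructor <;> linarith
    · rw [hD2]
      show -(ε * B) ≤ 0 + ε * deriv (deriv repU) x + η * deriv (deriv repV) x ∧
        0 + ε * deriv (deriv repU) x + η * deriv (deriv repV) x ≤ ε * B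
      constructor <;> linarith
    · have hf0 := repTf_nonneg x
      have hf1 := repTf_le_one x
      have hg0 := repTg_nonneg x
      have hg1 := repTg_le_one x
      have hu1 : 0 ≤ repU x := by rw [repU]; nlinarith
      have hu2 : repU x ≤ -x := by rw [repU]; nlinarith
      have hv1 : x ≤ repV x := by rw [repV]; nlinarith
      have hv2 : repV x ≤ 0 := by rw [repV]; nlinarith
      have hx0 : 0 ≤ -x := by linarith
      have p1 : 0 ≤ ε * repU x := mul_nonneg hε.le hu1
      have p2 : ε * repU x ≤ ε * (-x) := mul_le_mul_of_nonneg_left hu2 hε.le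
      have p3 : η * x ≤ η * repV x := mul_le_mul_of_nonneg_left hv1 hη0.le
      have p4 : η * repV x ≤ 0 := mul_nonpos_of_nonneg_of_nonpos hη0.le hv2
      have p5 : 2 * ε * x ≤ η * x := by
        have := mul_nonneg (sub_nonneg.mpr hη2) hx0
        nlinarith [this]
      have hB3 : 3 ≤ B := by rw [hB]; linarith
      have q1 : ε * B * x ≤ 3 * ε * x := by
        nlinarith [mul_nonneg (mul_nonneg hε.le hx0) (sub_nonneg.mpr hB3)]
      have q2 : ε * (-x) ≤ ε * B * (-x) := by
        nlinarith [mul_nonneg (mul_nonneg hε.le hx0) (by linarith : (0:ℝ) ≤ B - 1)]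
      have e1 : (1 + ε * B) * x = x + ε * B * x := by ring
      have e2 : (1 - ε * B) * x = x - ε * B * x := by ring
      constructor
      · show (1 + ε * B) * x ≤ x + ε * repU x + η * repV x
        rw [e1]; linarith
      · show x + ε * repU x + η * repV x ≤ (1 - ε * B) * x
        rw [e2]; linarith
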